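/- arXiv:1504.03127 — 3 statements merged into one kernel-verified Lean document; each statement's English description precedes it below -/
import Mathlib

section
/- Let i,j,k be pairwise distinct and s a set of signs. Indices i and j are adjacent in s if and only if i and j are adjacent in τ_{ik}(τ_{jk}(s)). (Goodness of a crossing is preserved under the third Reidemeister move applied to the preceding two crossings.) -/
/-- A set of signs: antisymmetric `±1`-valued function on pairs of distinct
indices in `{1,…,n}` (encoded as `Fin n`), with `0` on the diagonal. -/
def IsSignSet {n : ℕ} (s : Fin n → Fin n → ℤ) : Prop :=
  (∀ i j, i ≠ j → s i j = 1 ∨ s i j = -1) ∧ ∀ i j, s j i = -s i j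

/-- `N` realizes `s`: the `N i` are pairwise distinct reals and
`s i j = sign (N j - N i)`. -/
def Realizes {n : ℕ} (N : Fin n → ℝ) (s : Fin n → Fin n → ℤ) : Prop :=
  Function.Injective N ∧ ∀ i j, (s i j : ℝ) = Real.sign (N j - N i)

/-- A set of signs is realizable if some injective `N : Fin n → ℝ` realizes it. -/
def Realizable {n : ℕ} (s : Fin n → Fin n → ℤ) : Prop :=
  ∃ N : Fin n → ℝ, Realizes N s

/-- The sign-flip map `τ_{ij}`: negates the values at `(i,j)` and `(j,i)`,
fixing all other values. -/
def tau {n : ℕ} (i j : Fin n) (s : Fin n → Fin n → ℤ) : Fin n → Fin n → ℤ :=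
  fun p q => if (p = i ∧ q = j) ∨ (p = j ∧ q = i) then -s p q else s p q

/-- Indices `i` and `j` are adjacent in `s` if `s i k = s j k` for all `k ≠ i, j`. -/
def Adjacent {n : ℕ} (i j : Fin n) (s : Fin n → Fin n → ℤ) : Prop :=
  ∀ k, k ≠ i → k ≠ j → s i k = s j k

/-- The standard set of signs `B`: `B i j = +1` iff `i < j`. -/
def stdSigns (n : ℕ) : Fin n → Fin n → ℤ :=
  fun i j => if i < j then 1 else if j < i then -1 else 0

/-- Goodness of a crossing is preserved by a third Reidemeister move applied to
the two preceding crossings. -/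
theorem stmt8 {n : ℕ} (i j k : Fin n) (hij : i ≠ j) (hik : i ≠ k) (hjk : j ≠ k)
    (s : Fin n → Fin n → ℤ) :
    Adjacent i j s ↔ Adjacent i j (tau i k (tau j k s)) := by
  have key : ∀ l, l ≠ i → l ≠ j →
      (tau i k (tau j k s) i l = tau i k (tau j k s) j l ↔ s i l = s j l) := by
    intro l hli hlj
    by_cases hlk : l = k
    · subst hlk
      simp only [tau, hij, hij.symm, hik, hjk, (Ne.symm hli), (Ne.symm hlj)]
      simp [hik.symm, hjk.symm]
    · simp [tau, hik, hjk, hlk, Ne.symm hli, Ne.symm hlj, hij]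
  constructor
  · intro h l hli hlj; exact (key l hli hlj).mpr (h l hli hlj)
  · intro h l hli hlj; exact (key l hli hlj).mp (h l hli hlj)
end

section
/- If s is a realizable set of signs and indices i,j are adjacent in s, then τ_{ij}(s) is also realizable. -/
/-- Flipping a pair of adjacent indices preserves realizability. -/
theorem stmt10 {n : ℕ} (i j : Fin n) (hij : i ≠ j) (s : Fin n → Fin n → ℤ)
    (hreal : Realizable s) (hadj : Adjacent i j s) :
    Realizable (tau i j s) := by
  obtain ⟨N, hinj, hs⟩ := hreal
  have anti : ∀ a b, s b a = -s a b := by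
    intro a b
    have h : (s b a : ℝ) = -(s a b : ℝ) := by
      rw [hs b a, hs a b, show N a - N b = -(N b - N a) by ring, Real.sign_neg]
    exact_mod_cast h
  refine ⟨N ∘ Equiv.swap i j, hinj.comp (Equiv.swap i j).injective, ?_⟩
  intro p q
  have hval : tau i j s p q = s (Equiv.swap i j p) (Equiv.swap i j q) := by
    have diag : ∀ a, s a a = 0 := fun a => by have := anti a a; omega
    unfold tau
    by_cases h : (p = i ∧ q = j) ∨ (p = j ∧ q = i)
    · rw [if_pos h]
      rcases h with ⟨h1, h2⟩ | ⟨h1, h2⟩ <;> rw [h1, h2]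
      · rw [Equiv.swap_apply_left, Equiv.swap_apply_right, anti i j]
      · rw [Equiv.swap_apply_left, Equiv.swap_apply_right, anti j i]
    · rw [if_neg h]
      rcases eq_or_ne p i with hpi | hpi
      · have hqj : q ≠ j := fun hq => h (Or.inl ⟨hpi, hq⟩)
        rcases eq_or_ne q i with hqi | hqi
        · rw [hpi, hqi]; simp [diag]
        · rw [hpi, Equiv.swap_apply_left, Equiv.swap_apply_of_ne_of_ne hqi hqj]
          exact hadj q hqi hqj
      · rcases eq_or_ne p j with hpj | hpj
        · have hqi : q ≠ i := fun hq => h (Or.inr ⟨hpj, hq⟩)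
          rcases eq_or_ne q j with hqj | hqj
          · rw [hpj, hqj]; simp [diag]
          · rw [hpj, Equiv.swap_apply_right, Equiv.swap_apply_of_ne_of_ne hqi hqj]
            exact (hadj q hqi hqj).symm
        · rw [Equiv.swap_apply_of_ne_of_ne hpi hpj]
          rcases eq_or_ne q i with hqi | hqi
          · rw [hqi, Equiv.swap_apply_left]
            have h1 := anti p i; have h2 := anti p j
            have h3 := hadj p hpi hpj
            omega
          · rcases eq_or_ne q j with hqj | hqj
            · rw [hqj, Equiv.swap_apply_right]
              have h1 := anti p i; have h2 := anti p j
              have h3 := hadj p hpi hpj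
              omega
            · rw [Equiv.swap_apply_of_ne_of_ne hqi hqj]
  simp only [Function.comp_apply]
  rw [hval]
  exact hs _ _
end

section
/- If s is a realizable set of signs corresponding to permutation σ (i.e., s(i,j)=+1 iff σ(i)<σ(j)), and indices i,j are adjacent in s, then τ_{ij}(s) is the realizable set of signs corresponding to the permutation (σ(i) σ(j)) ∘ σ obtained by swapping the values σ(i) and σ(j), and |σ(i) - σ(j)| = 1. -/
/-- The realizable set of signs associated to a permutation `σ`:
`sPerm σ i j = +1` iff `σ i < σ j`. -/
def sPerm {n : ℕ} (σ : Equiv.Perm (Fin n)) : Fin n → Fin n → ℤ :=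
  fun i j => if σ i < σ j then 1 else if σ j < σ i then -1 else 0

/-- A good flip on `s_σ` yields `s_{(σ i, σ j) ∘ σ}`, and `σ i`, `σ j` are
consecutive. -/
theorem stmt16 {n : ℕ} (σ : Equiv.Perm (Fin n)) (i j : Fin n) (hij : i ≠ j)
    (hadj : Adjacent i j (sPerm σ)) :
    tau i j (sPerm σ) = sPerm (σ.trans (Equiv.swap (σ i) (σ j))) ∧
    (((σ i : ℕ) : ℤ) - ((σ j : ℕ) : ℤ)).natAbs = 1 := by
  have hσ : σ i ≠ σ j := fun h => hij (σ.injective h)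
  have hσn : (σ i : ℕ) ≠ (σ j : ℕ) := fun h => hσ (Fin.val_injective h)
  have key : ∀ k, k ≠ i → k ≠ j → ((σ i : ℕ) < σ k ↔ (σ j : ℕ) < σ k) := by
    intro k hki hkj
    have h := hadj k hki hkj
    simp only [sPerm, Fin.lt_def] at h
    split_ifs at h <;> omega
  constructor
  · funext p q
    have hswl : (Equiv.swap (σ i) (σ j)) (σ i) = σ j := Equiv.swap_apply_left _ _
    have hswr : (Equiv.swap (σ i) (σ j)) (σ j) = σ i := Equiv.swap_apply_right _ _
    have hsw : ∀ p, p ≠ i → p ≠ j → (Equiv.swap (σ i) (σ j)) (σ p) = σ p := by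
      intro p h1 h2
      exact Equiv.swap_apply_of_ne_of_ne (fun h => h1 (σ.injective h))
        (fun h => h2 (σ.injective h))
    have hvne : ∀ p, p ≠ i → p ≠ j → (σ p : ℕ) ≠ σ i ∧ (σ p : ℕ) ≠ σ j := by
      intro p h1 h2
      exact ⟨fun h => h1 (σ.injective (Fin.val_injective h)),
             fun h => h2 (σ.injective (Fin.val_injective h))⟩
    simp only [tau, sPerm, Equiv.trans_apply]
    by_cases hpi : p = i
    · subst hpi
      by_cases hqi : q = p
      · subst hqi
        rw [if_neg (by tauto)]
        simp [Fin.lt_def]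
      by_cases hqj : q = j
      · subst hqj
        rw [if_pos (by tauto)]
        simp only [hswl, hswr, Fin.lt_def]
        split_ifs <;> omega
      · rw [if_neg (by tauto)]
        simp only [hswl, hsw q hqi hqj, Fin.lt_def]
        have h1 := key q hqi hqj
        have h2 := hvne q hqi hqj
        split_ifs <;> omega
    by_cases hpj : p = j
    · subst hpj
      by_cases hqi : q = i
      · subst hqi
        rw [if_pos (by tauto)]
        simp only [hswl, hswr, Fin.lt_def]
        split_ifs <;> omega
      by_cases hqj : q = p
      · subst hqj
        rw [if_neg (by tauto)]
        simp [Fin.lt_def]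
      · rw [if_neg (by tauto)]
        simp only [hswr, hsw q hqi hqj, Fin.lt_def]
        have h1 := key q hqi hqj
        have h2 := hvne q hqi hqj
        split_ifs <;> omega
    · rw [if_neg (by tauto)]
      by_cases hqi : q = i
      · subst hqi
        simp only [hswl, hsw p hpi hpj, Fin.lt_def]
        have h1 := key p hpi hpj
        have h2 := hvne p hpi hpj
        split_ifs <;> omega
      by_cases hqj : q = j
      · subst hqj
        simp only [hswr, hsw p hpi hpj, Fin.lt_def]
        have h1 := key p hpi hpj
        have h2 := hvne p hpi hpj
        split_ifs <;> omega
      · simp only [hsw p hpi hpj, hsw q hqi hqj]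
  · by_contra hc
    have hlt : (σ j : ℕ) < n := (σ j).isLt
    have hlt' : (σ i : ℕ) < n := (σ i).isLt
    rcases lt_or_gt_of_ne hσn with hab | hab
    · have h2 : (σ i : ℕ) + 1 < (σ j : ℕ) := by omega
      obtain ⟨k, hk⟩ : ∃ k, σ k = ⟨(σ i : ℕ) + 1, by omega⟩ :=
        ⟨σ.symm _, σ.apply_symm_apply _⟩
      have hv : (σ k : ℕ) = (σ i : ℕ) + 1 := by rw [hk]
      have hki : k ≠ i := by intro h; rw [h] at hv; omega
      have hkj : k ≠ j := by intro h; rw [h] at hv; omega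
      have := key k hki hkj
      omega
    · have h2 : (σ j : ℕ) + 1 < (σ i : ℕ) := by omega
      obtain ⟨k, hk⟩ : ∃ k, σ k = ⟨(σ j : ℕ) + 1, by omega⟩ :=
        ⟨σ.symm _, σ.apply_symm_apply _⟩
      have hv : (σ k : ℕ) = (σ j : ℕ) + 1 := by rw [hk]
      have hki : k ≠ i := by intro h; rw [h] at hv; omega
      have hkj : k ≠ j := by intro h; rw [h] at hv; omega
      have := key k hki hkj
      omega
end
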